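/- Let N_ℝ be a finite-dimensional real vector space with dual M_ℝ. Let e₁, …, e_k ∈ N_ℝ and a₁, …, a_k ∈ ℝ with all a_i ≥ 0. Define □ = {m ∈ M_ℝ : ⟨m, e_i⟩ + a_i ≥ 0 for all i} and U = {e ∈ N_ℝ : ⟨m, e⟩ ≥ −1 for all m ∈ □}. Then U = conv({0} ∪ {e_i/a_i : a_i > 0}) + Σ_{i : a_i = 0} ℝ_{≥0} e_i, where the last term is the convex cone generated by the e_i with a_i = 0. -/

import Mathlib

open Pointwise

/-- The convex cone generated by a set `s`: all finite nonnegative linear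
combinations of elements of `s`. -/
def coneHull {V : Type*} [AddCommGroup V] [Module ℝ V] (s : Set V) : Set V :=
  {x | ∃ (n : ℕ) (c : Fin n → ℝ) (v : Fin n → V),
    (∀ i, 0 ≤ c i) ∧ (∀ i, v i ∈ s) ∧ x = ∑ i, c i • v i}

section ConeHullBasic
variable {V : Type*} [AddCommGroup V] [Module ℝ V] {s t : Set V}

lemma coneHull_zero_mem (s : Set V) : (0 : V) ∈ coneHull s :=
  ⟨0, Fin.elim0, Fin.elim0, fun i => i.elim0, fun i => i.elim0, by simp⟩

lemma coneHull_mono (h : s ⊆ t) : coneHull s ⊆ coneHull t := by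
  rintro x ⟨n, c, v, hc, hv, rfl⟩
  exact ⟨n, c, v, hc, fun i => h (hv i), rfl⟩

lemma sum_mem_coneHull {ι : Type*} [Fintype ι] {c : ι → ℝ} {v : ι → V}
    (hc : ∀ i, 0 ≤ c i) (hv : ∀ i, v i ∈ s) : ∑ i, c i • v i ∈ coneHull s := by
  classical
  let e := (Fintype.equivFin ι).symm
  exact ⟨Fintype.card ι, c ∘ e, v ∘ e, fun i => hc _, fun i => hv _,
    (Fintype.sum_equiv e _ _ (fun i => rfl)).symm⟩

lemma coneHull_add_mem {x y : V} (hx : x ∈ coneHull s) (hy : y ∈ coneHull s) :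
    x + y ∈ coneHull s := by
  obtain ⟨n, c, v, hc, hv, rfl⟩ := hx
  obtain ⟨m, d, w, hd, hw, rfl⟩ := hy
  refine ⟨n + m, Fin.append c d, Fin.append v w, ?_, ?_, ?_⟩
  · intro i
    induction i using Fin.addCases with
    | left i => simpa [Fin.append_left] using hc i
    | right i => simpa [Fin.append_right] using hd i
  · intro i
    induction i using Fin.addCases with
    | left i => simpa [Fin.append_left] using hv i
    | right i => simpa [Fin.append_right] using hw i
  · rw [Fin.sum_univ_add]
    simp [Fin.append_left, Fin.append_right]

lemma coneHull_smul_mem {r : ℝ} (hr : 0 ≤ r) {x : V} (hx : x ∈ coneHull s) :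
    r • x ∈ coneHull s := by
  obtain ⟨n, c, v, hc, hv, rfl⟩ := hx
  refine ⟨n, fun i => r * c i, v, fun i => mul_nonneg hr (hc i), hv, ?_⟩
  rw [Finset.smul_sum]
  simp [smul_smul]

lemma coneHull_mem_of_mem {x : V} (hx : x ∈ s) : x ∈ coneHull s :=
  ⟨1, fun _ => 1, fun _ => x, fun _ => zero_le_one, fun _ => hx, by simp⟩

lemma convex_coneHull (s : Set V) : Convex ℝ (coneHull s) := by
  intro x hx y hy p q hp hq _
  exact coneHull_add_mem (coneHull_smul_mem hp hx) (coneHull_smul_mem hq hy)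

lemma coneHull_image {W : Type*} [AddCommGroup W] [Module ℝ W] (f : V →ₗ[ℝ] W) (s : Set V) :
    f '' coneHull s = coneHull (f '' s) := by
  ext y
  constructor
  · rintro ⟨x, ⟨n, c, v, hc, hv, rfl⟩, rfl⟩
    refine ⟨n, c, f ∘ v, hc, fun i => ⟨v i, hv i, rfl⟩, ?_⟩
    simp [map_sum]
  · rintro ⟨n, c, w, hc, hw, rfl⟩
    choose v hv hfv using hw
    refine ⟨∑ i, c i • v i, ⟨n, c, v, hc, hv, rfl⟩, ?_⟩
    simp [map_sum, hfv]

end ConeHullBasic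

section Carath
variable {E : Type*} [AddCommGroup E] [Module ℝ E] {s : Set E}

lemma coneHull_carath_aux (s : Set E) :
    ∀ n (c : Fin n → ℝ) (v : Fin n → E), (∀ i, 0 ≤ c i) → (∀ i, v i ∈ s) →
    ∃ t : Finset E, ↑t ⊆ s ∧ LinearIndependent ℝ ((↑) : (↑t : Set E) → E) ∧
      (∑ i, c i • v i) ∈ coneHull (↑t : Set E) := by
  intro n
  induction n using Nat.strong_induction_on with
  | _ n IH =>
  intro c v hc hv
  classical
  by_cases hli : LinearIndependent ℝ v
  · refine ⟨Finset.image v Finset.univ, ?_, ?_, ?_⟩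
    · rw [Finset.coe_image, Finset.coe_univ, Set.image_univ]
      exact Set.range_subset_iff.2 hv
    · rw [Finset.coe_image, Finset.coe_univ, Set.image_univ]
      exact hli.linearIndepOn_id
    · refine ⟨n, c, v, hc, fun i => ?_, rfl⟩
      rw [Finset.coe_image, Finset.coe_univ, Set.image_univ]
      exact ⟨i, rfl⟩
  · obtain ⟨g₀, hg₀, j₁, hj₁⟩ := Fintype.not_linearIndependent_iff.1 hli
    obtain ⟨g, hgsum, i₁, hi₁⟩ : ∃ g : Fin n → ℝ, ∑ i, g i • v i = 0 ∧ ∃ i, 0 < g i := by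
      rcases lt_or_gt_of_ne hj₁ with h | h
      · refine ⟨-g₀, ?_, j₁, by simpa using h⟩
        simp only [Pi.neg_apply, neg_smul, Finset.sum_neg_distrib, hg₀, neg_zero]
      · exact ⟨g₀, hg₀, j₁, h⟩
    set T : Finset (Fin n) := Finset.univ.filter (fun i => 0 < g i) with hT
    have hi₁T : i₁ ∈ T := by simp [hT, hi₁]
    obtain ⟨i₀, hi₀T, hmin⟩ := T.exists_min_image (fun i => c i / g i) ⟨i₁, hi₁T⟩
    have hgi₀ : 0 < g i₀ := by simpa [hT] using hi₀T
    set r : ℝ := c i₀ / g i₀ with hr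
    have hr0 : 0 ≤ r := div_nonneg (hc i₀) hgi₀.le
    set c' : Fin n → ℝ := fun i => c i - r * g i with hc'
    have hc'0 : ∀ i, 0 ≤ c' i := by
      intro i
      rcases le_or_gt (g i) 0 with h | h
      · have h2 : r * g i ≤ 0 := mul_nonpos_of_nonneg_of_nonpos hr0 h
        have := hc i
        simp only [hc']; linarith
      · have hiT : i ∈ T := by simp [hT, h]
        have h3 : r * g i ≤ (c i / g i) * g i :=
          mul_le_mul_of_nonneg_right (hmin i hiT) h.le
        rw [div_mul_cancel₀ (c i) h.ne'] at h3
        simp only [hc']; linarith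
    have hsum' : ∑ i, c' i • v i = ∑ i, c i • v i := by
      simp only [hc', sub_smul]
      rw [Finset.sum_sub_distrib]
      have : ∑ i, (r * g i) • v i = r • ∑ i, g i • v i := by
        rw [Finset.smul_sum]
        simp [mul_smul]
      rw [this, hgsum, smul_zero, sub_zero]
    have hc'i₀ : c' i₀ = 0 := by
      simp only [hc', hr]
      rw [div_mul_cancel₀ (c i₀) hgi₀.ne']
      ring
    obtain ⟨m, rfl⟩ : ∃ m, n = m + 1 := ⟨n - 1, (Nat.succ_pred_eq_of_pos i₀.pos).symm⟩
    obtain ⟨t, hts, hind, hmem⟩ := IH m (Nat.lt_succ_self m) (fun i => c' (i₀.succAbove i))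
      (fun i => v (i₀.succAbove i)) (fun i => hc'0 _) (fun i => hv _)
    refine ⟨t, hts, hind, ?_⟩
    have heq : ∑ i, c i • v i = ∑ i : Fin m, c' (i₀.succAbove i) • v (i₀.succAbove i) := by
      rw [← hsum', Fin.sum_univ_succAbove (fun i => c' i • v i) i₀, hc'i₀, zero_smul, zero_add]
    rw [heq]
    exact hmem

end Carath

section Closed
variable {E : Type*} [NormedAddCommGroup E] [NormedSpace ℝ E]

lemma isClosed_coneHull_of_linearIndependent (t : Finset E)
    (hind : LinearIndependent ℝ ((↑) : (↑t : Set E) → E)) :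
    IsClosed (coneHull (↑t : Set E)) := by
  classical
  set ι := ((↑t : Set E) : Type _)
  let L : (ι → ℝ) →ₗ[ℝ] E :=
    { toFun := fun c => ∑ i, c i • (i : E)
      map_add' := by
        intro x y
        simp [add_smul, Finset.sum_add_distrib]
      map_smul' := by
        intro r x
        simp [smul_smul, Finset.smul_sum] }
  have hinj : Function.Injective L := by
    intro d d' hdd
    have hz : ∑ i, (d i - d' i) • (i : E) = 0 := by
      simp only [sub_smul, Finset.sum_sub_distrib]
      have : L d = L d' := hdd
      simp only [L, LinearMap.coe_mk, AddHom.coe_mk] at this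
      rw [this, sub_self]
    have h4 := Fintype.linearIndependent_iff.1 hind (fun i => d i - d' i) hz
    funext i
    have h5 : d i - d' i = 0 := h4 i
    linarith
  have himg : coneHull (↑t : Set E) = L '' {c : ι → ℝ | ∀ i, 0 ≤ c i} := by
    ext x
    constructor
    · rintro ⟨n, c, v, hc, hv, rfl⟩
      set g : Fin n → ι := fun i => (⟨v i, hv i⟩ : ι) with hg
      refine ⟨fun u => ∑ i ∈ Finset.univ.filter (fun i => g i = u), c i,
        fun u => Finset.sum_nonneg fun i _ => hc i, ?_⟩
      simp only [L, LinearMap.coe_mk, AddHom.coe_mk]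
      rw [← Finset.sum_fiberwise_of_maps_to (fun i _ => Finset.mem_univ (g i))
        (fun i => c i • v i)]
      refine Finset.sum_congr rfl fun u _ => ?_
      rw [Finset.sum_smul]
      refine Finset.sum_congr rfl fun i hi => ?_
      have : g i = u := (Finset.mem_filter.1 hi).2
      rw [← this]
    · rintro ⟨c, hc, rfl⟩
      exact sum_mem_coneHull hc (fun i => i.2)
  rw [himg]
  have hker : LinearMap.ker L = ⊥ := LinearMap.ker_eq_bot.2 hinj
  have hclosed : IsClosed {c : ι → ℝ | ∀ i, 0 ≤ c i} := by
    have : {c : ι → ℝ | ∀ i, 0 ≤ c i} = ⋂ i, {c : ι → ℝ | 0 ≤ c i} := by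
      ext c; simp [Set.mem_iInter]
    rw [this]
    exact isClosed_iInter fun i => isClosed_le continuous_const (continuous_apply i)
  exact (L.isClosedEmbedding_of_injective hker).isClosedMap _ hclosed

lemma isClosed_coneHull_of_finite {s : Set E} (hs : s.Finite) : IsClosed (coneHull s) := by
  classical
  have hrw : coneHull s = ⋃ t ∈ {t : Finset E | ↑t ⊆ s ∧
      LinearIndependent ℝ ((↑) : (↑t : Set E) → E)}, coneHull (↑t : Set E) := by
    ext x
    simp only [Set.mem_iUnion, Set.mem_setOf_eq]
    constructor
    · rintro ⟨n, c, v, hc, hv, rfl⟩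
      obtain ⟨t, h1, h2, h3⟩ := coneHull_carath_aux s n c v hc hv
      exact ⟨t, ⟨h1, h2⟩, h3⟩
    · rintro ⟨t, ⟨h1, _⟩, hx⟩
      exact coneHull_mono h1 hx
  rw [hrw]
  apply Set.Finite.isClosed_biUnion
  · apply Set.Finite.subset (hs.toFinset.powerset : Finset (Finset E)).finite_toSet
    rintro t ⟨h1, -⟩
    simp only [Finset.coe_powerset, Set.mem_preimage, Set.mem_powerset_iff, Finset.coe_subset,
      Finset.mem_coe, Finset.mem_powerset]
    intro x hx
    exact hs.mem_toFinset.2 (h1 hx)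
  · rintro t ⟨-, h2⟩
    exact isClosed_coneHull_of_linearIndependent t h2

end Closed

lemma key_separation {E : Type*} [NormedAddCommGroup E] [NormedSpace ℝ E]
    [FiniteDimensional ℝ E]
    (k : ℕ) (e : Fin k → E) (a : Fin k → ℝ) (ha : ∀ i, 0 ≤ a i) (x : E)
    (hx : ∀ f : E →ₗ[ℝ] ℝ, (∀ i, 0 ≤ f (e i) + a i) → -1 ≤ f x) :
    x ∈ convexHull ℝ ({0} ∪ {z | ∃ i, 0 < a i ∧ z = (a i)⁻¹ • e i} : Set E) +
      coneHull {z | ∃ i, a i = 0 ∧ z = e i} := by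
  by_contra hxmem
  set P := convexHull ℝ ({0} ∪ {z | ∃ i, 0 < a i ∧ z = (a i)⁻¹ • e i} : Set E) with hP
  set C := coneHull {z | ∃ i, a i = 0 ∧ z = e i} with hC
  have hPfin : ({0} ∪ {z | ∃ i, 0 < a i ∧ z = (a i)⁻¹ • e i} : Set E).Finite := by
    apply Set.Finite.union (Set.finite_singleton 0)
    apply (Set.finite_range (fun i => (a i)⁻¹ • e i)).subset
    rintro z ⟨i, -, rfl⟩
    exact ⟨i, rfl⟩
  have hCfin : ({z | ∃ i, a i = 0 ∧ z = e i} : Set E).Finite := by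
    apply (Set.finite_range e).subset
    rintro z ⟨i, -, rfl⟩
    exact ⟨i, rfl⟩
  have hPcompact : IsCompact P := hPfin.isCompact_convexHull ℝ
  have hCclosed : IsClosed C := isClosed_coneHull_of_finite hCfin
  have hclosed : IsClosed (P + C) := hCclosed.add_left_of_isCompact hPcompact
  have hconv : Convex ℝ (P + C) := (convex_convexHull ℝ _).add (convex_coneHull _)
  obtain ⟨f, u, hfx, hfb⟩ := geometric_hahn_banach_point_closed hconv hclosed hxmem
  have h0P : (0 : E) ∈ P := subset_convexHull ℝ _ (Or.inl rfl)
  have h0C : (0 : E) ∈ C := coneHull_zero_mem _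
  have hu0 : u < 0 := by
    have := hfb 0 (by simpa using Set.add_mem_add h0P h0C)
    simpa using this
  have hnu : 0 < -u := by linarith
  set g : E →ₗ[ℝ] ℝ := (-u)⁻¹ • (f : E →ₗ[ℝ] ℝ) with hg
  have hgapp : ∀ z : E, g z = (-u)⁻¹ * f z := fun z => rfl
  have hbox : ∀ i, 0 ≤ g (e i) + a i := by
    intro i
    rcases (ha i).eq_or_lt with h | h
    · have hfe : 0 ≤ f (e i) := by
        by_contra hneg
        push_neg at hneg
        have hrpos : 0 < (u - 1) / f (e i) := div_pos_of_neg_of_neg (by linarith) hneg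
        have hmem : (0 : E) + ((u - 1) / f (e i)) • e i ∈ P + C :=
          Set.add_mem_add h0P
            (coneHull_smul_mem hrpos.le (coneHull_mem_of_mem ⟨i, h.symm, rfl⟩))
        have h6 := hfb _ hmem
        rw [zero_add, map_smul, smul_eq_mul, div_mul_cancel₀ _ hneg.ne] at h6
        linarith
      have h7 : 0 ≤ g (e i) := by
        rw [hgapp]
        exact mul_nonneg (inv_nonneg.2 hnu.le) hfe
      rw [← h]
      simpa using h7
    · have hmem : (a i)⁻¹ • e i + (0 : E) ∈ P + C :=
        Set.add_mem_add (subset_convexHull ℝ _ (Or.inr ⟨i, h, rfl⟩)) h0C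
      have h4 := hfb _ hmem
      rw [add_zero, map_smul, smul_eq_mul] at h4
      have h5 : u * a i < f (e i) := by
        have h5' := mul_lt_mul_of_pos_right h4 h
        rwa [mul_comm ((a i)⁻¹) _, mul_assoc, inv_mul_cancel₀ h.ne', mul_one] at h5'
      have h6 : (-u)⁻¹ * (u * a i) < (-u)⁻¹ * f (e i) :=
        mul_lt_mul_of_pos_left h5 (inv_pos.2 hnu)
      have h7 : (-u)⁻¹ * (u * a i) = -a i := by
        rw [inv_neg, neg_mul, ← mul_assoc, inv_mul_cancel₀ hu0.ne, one_mul]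
      rw [hgapp]
      linarith
  have h8 := hx g hbox
  have h9 : g x < -1 := by
    rw [hgapp]
    have h10 := mul_lt_mul_of_pos_left hfx (inv_pos.2 hnu)
    have h11 : (-u)⁻¹ * u = -1 := by rw [inv_neg, neg_mul, inv_mul_cancel₀ hu0.ne]
    linarith
  linarith

/-- Let `N_ℝ` be a finite-dimensional real vector space with dual `M_ℝ`. Let
`e₁, …, e_k ∈ N_ℝ` and `a₁, …, a_k ≥ 0`. Define `□ = {m : ⟨m, e_i⟩ + a_i ≥ 0 ∀ i}` and
`U = {e : ⟨m, e⟩ ≥ -1 ∀ m ∈ □}`. Then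
`U = conv({0} ∪ {e_i/a_i : a_i > 0}) + Σ_{a_i = 0} ℝ_{≥0} e_i`. -/
theorem stmt_10 {V : Type*} [AddCommGroup V] [Module ℝ V] [FiniteDimensional ℝ V]
    (k : ℕ) (e : Fin k → V) (a : Fin k → ℝ) (ha : ∀ i, 0 ≤ a i)
    (box : Set (Module.Dual ℝ V))
    (hbox : box = {m | ∀ i, 0 ≤ m (e i) + a i})
    (U : Set V) (hU : U = {x | ∀ m ∈ box, -1 ≤ m x}) :
    U = {y | ∃ p ∈ convexHull ℝ
        ({0} ∪ {x | ∃ i, 0 < a i ∧ x = (a i)⁻¹ • e i} : Set V),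
      ∃ s ∈ coneHull {x | ∃ i, a i = 0 ∧ x = e i}, y = p + s} := by
  subst hbox hU
  ext x
  simp only [Set.mem_setOf_eq]
  constructor
  · intro hx
    set n := Module.finrank ℝ V
    set φ : V ≃ₗ[ℝ] (Fin n → ℝ) := (Module.finBasis ℝ V).equivFun with hφ
    have hkey := key_separation k (fun i => φ (e i)) a ha (φ x) ?_
    swap
    · intro f hf
      have hm : ∀ i, 0 ≤ (f ∘ₗ (φ : V →ₗ[ℝ] Fin n → ℝ)) (e i) + a i := by
        intro i
        simpa using hf i
      simpa using hx (f ∘ₗ (φ : V →ₗ[ℝ] Fin n → ℝ)) hm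
    rw [Set.mem_add] at hkey
    obtain ⟨p', hp', s', hs', hsum⟩ := hkey
    have hgen1 : ({0} ∪ {z | ∃ i, 0 < a i ∧ z = (a i)⁻¹ • (φ (e i))} : Set (Fin n → ℝ)) =
        φ '' ({0} ∪ {x | ∃ i, 0 < a i ∧ x = (a i)⁻¹ • e i}) := by
      ext z
      constructor
      · rintro (rfl | ⟨i, hi, rfl⟩)
        · exact ⟨0, Or.inl rfl, map_zero _⟩
        · exact ⟨(a i)⁻¹ • e i, Or.inr ⟨i, hi, rfl⟩, by simp⟩
      · rintro ⟨w, (rfl | ⟨i, hi, rfl⟩), rfl⟩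
        · exact Or.inl (by simp)
        · exact Or.inr ⟨i, hi, by simp⟩
    have hgen2 : ({z | ∃ i, a i = 0 ∧ z = φ (e i)} : Set (Fin n → ℝ)) =
        φ '' {x | ∃ i, a i = 0 ∧ x = e i} := by
      ext z
      constructor
      · rintro ⟨i, hi, rfl⟩
        exact ⟨e i, ⟨i, hi, rfl⟩, rfl⟩
      · rintro ⟨w, ⟨i, hi, rfl⟩, rfl⟩
        exact ⟨i, hi, rfl⟩
    have himg1 : convexHull ℝ (⇑φ '' ({0} ∪ {x | ∃ i, 0 < a i ∧ x = (a i)⁻¹ • e i} : Set V)) =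
        ⇑φ '' (convexHull ℝ ({0} ∪ {x | ∃ i, 0 < a i ∧ x = (a i)⁻¹ • e i} : Set V)) := by
      simpa using
        ((φ : V →ₗ[ℝ] (Fin n → ℝ)).image_convexHull
          ({0} ∪ {x | ∃ i, 0 < a i ∧ x = (a i)⁻¹ • e i} : Set V)).symm
    have himg2 : coneHull (⇑φ '' ({x | ∃ i, a i = 0 ∧ x = e i} : Set V)) =
        ⇑φ '' (coneHull ({x | ∃ i, a i = 0 ∧ x = e i} : Set V)) := by
      simpa using
        (coneHull_image (φ : V →ₗ[ℝ] (Fin n → ℝ)) ({x | ∃ i, a i = 0 ∧ x = e i} : Set V)).symm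
    rw [hgen1, himg1] at hp'
    rw [hgen2, himg2] at hs'
    obtain ⟨p, hp, hpeq⟩ := hp'
    obtain ⟨s0, hs0, hseq⟩ := hs'
    refine ⟨p, hp, s0, hs0, ?_⟩
    apply φ.injective
    rw [map_add]
    rw [hpeq, hseq, hsum]
  · rintro ⟨p, hp, s0, hs0, rfl⟩
    intro m hm
    have hms : 0 ≤ m s0 := by
      obtain ⟨nn, c, v, hc, hv, rfl⟩ := hs0
      rw [map_sum]
      apply Finset.sum_nonneg
      intro i _
      rw [map_smul, smul_eq_mul]
      obtain ⟨j, hj, hje⟩ := hv i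
      have h2 := hm j
      rw [hj, add_zero] at h2
      rw [hje]
      exact mul_nonneg (hc i) h2
    have hmp : -1 ≤ m p := by
      have hsub : ({0} ∪ {x | ∃ i, 0 < a i ∧ x = (a i)⁻¹ • e i} : Set V) ⊆
          {z | -1 ≤ m z} := by
        rintro z (rfl | ⟨i, hi, rfl⟩)
        · simp
        · simp only [Set.mem_setOf_eq, map_smul, smul_eq_mul]
          have h2 := hm i
          have h3 : -(a i) ≤ m (e i) := by linarith
          have h4 : (a i)⁻¹ * (-(a i)) ≤ (a i)⁻¹ * m (e i) :=
            mul_le_mul_of_nonneg_left h3 (inv_nonneg.2 (ha i))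
          have h5 : (a i)⁻¹ * (-(a i)) = -1 := by field_simp
          linarith
      exact convexHull_min hsub (convex_halfSpace_ge m.isLinear (-1)) hp
    rw [map_add]
    linarith
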